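/- Let (X,e,μ) be an NP_2-digital H-space with X NP_2-irreducible. Then {e} is a connected component of X, so X = {e} ⊔ Z where Z = X \ {e}; moreover e is a unit for μ, and there exist an (NP_2,κ)-continuous map τ : Z × Z → Z and a subset A ⊆ Z × Z which is a union of connected components of Z × Z (with NP_2 adjacency) such that μ(x,y) = τ(x,y) for (x,y) ∈ A, μ(x,e) = x for all x, μ(e,y) = y for all y, and μ(x,y) = e for all (x,y) ∈ (Z × Z) \ A. -/

import Mathlib

/-- A digital image: a finite set with a reflexive, symmetric adjacency relation
(a finite reflexive graph). -/
structure DigImage where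
  carrier : Type
  [fintype : Fintype carrier]
  adj : carrier → carrier → Prop
  adj_refl : ∀ x, adj x x
  adj_symm : ∀ {x y}, adj x y → adj y x

attribute [instance] DigImage.fintype

/-- `f : (X,κ) → (Y,λ)` is digitally continuous if it preserves adjacency. -/
def DigContinuous (X Y : DigImage) (f : X.carrier → Y.carrier) : Prop :=
  ∀ ⦃a b : X.carrier⦄, X.adj a b → Y.adj (f a) (f b)

/-- The product of two digital images with the normal product adjacency `NP_i`
(for `i ≤ 1` this is `NP_1`; otherwise `NP_2`): two pairs are adjacent iff
their coordinates are adjacent in at most `i` positions and equal elsewhere. -/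
def DigImage.prod (i : ℕ) (X Y : DigImage) : DigImage where
  carrier := X.carrier × Y.carrier
  adj p q :=
    if i ≤ 1 then (p.1 = q.1 ∧ Y.adj p.2 q.2) ∨ (p.2 = q.2 ∧ X.adj p.1 q.1)
    else X.adj p.1 q.1 ∧ Y.adj p.2 q.2
  adj_refl p := by
    split_ifs
    · exact Or.inl ⟨rfl, Y.adj_refl p.2⟩
    · exact ⟨X.adj_refl p.1, Y.adj_refl p.2⟩
  adj_symm {p q} h := by
    split_ifs at h ⊢ with hi
    · rcases h with ⟨h1, h2⟩ | ⟨h1, h2⟩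
      · exact Or.inl ⟨h1.symm, Y.adj_symm h2⟩
      · exact Or.inr ⟨h1.symm, X.adj_symm h2⟩
    · exact ⟨X.adj_symm h.1, Y.adj_symm h.2⟩

/-- The triple product of digital images with the normal product adjacency `NP_i`:
coordinates adjacent in at most `i` positions and equal in all other positions. -/
def DigImage.prod3 (i : ℕ) (X Y Z : DigImage) : DigImage where
  carrier := X.carrier × Y.carrier × Z.carrier
  adj p q :=
    if i ≤ 1 then
      (p.1 = q.1 ∧ p.2.1 = q.2.1 ∧ Z.adj p.2.2 q.2.2) ∨
      (p.1 = q.1 ∧ p.2.2 = q.2.2 ∧ Y.adj p.2.1 q.2.1) ∨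
      (p.2.1 = q.2.1 ∧ p.2.2 = q.2.2 ∧ X.adj p.1 q.1)
    else
      (p.1 = q.1 ∧ Y.adj p.2.1 q.2.1 ∧ Z.adj p.2.2 q.2.2) ∨
      (p.2.1 = q.2.1 ∧ X.adj p.1 q.1 ∧ Z.adj p.2.2 q.2.2) ∨
      (p.2.2 = q.2.2 ∧ X.adj p.1 q.1 ∧ Y.adj p.2.1 q.2.1)
  adj_refl p := by
    split_ifs
    · exact Or.inl ⟨rfl, rfl, Z.adj_refl p.2.2⟩
    · exact Or.inl ⟨rfl, Y.adj_refl p.2.1, Z.adj_refl p.2.2⟩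
  adj_symm {p q} h := by
    split_ifs at h ⊢ with hi
    · rcases h with ⟨h1, h2, h3⟩ | ⟨h1, h2, h3⟩ | ⟨h1, h2, h3⟩
      · exact Or.inl ⟨h1.symm, h2.symm, Z.adj_symm h3⟩
      · exact Or.inr (Or.inl ⟨h1.symm, h2.symm, Y.adj_symm h3⟩)
      · exact Or.inr (Or.inr ⟨h1.symm, h2.symm, X.adj_symm h3⟩)
    · rcases h with ⟨h1, h2, h3⟩ | ⟨h1, h2, h3⟩ | ⟨h1, h2, h3⟩
      · exact Or.inl ⟨h1.symm, Y.adj_symm h2, Z.adj_symm h3⟩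
      · exact Or.inr (Or.inl ⟨h1.symm, X.adj_symm h2, Z.adj_symm h3⟩)
      · exact Or.inr (Or.inr ⟨h1.symm, X.adj_symm h2, Y.adj_symm h3⟩)

/-- The digital interval `[0,m]_ℤ` with the standard adjacency `|a−b| ≤ 1`. -/
def digInterval (m : ℕ) : DigImage where
  carrier := Fin (m + 1)
  adj a b := |(a : ℤ) - (b : ℤ)| ≤ 1
  adj_refl a := by simp
  adj_symm {a b} h := by
    have h' : |(a : ℤ) - (b : ℤ)| ≤ 1 := h
    rw [abs_sub_comm] at h'
    exact h'

/-- `f` and `g` are `NP_i`-digitally homotopic: there is an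
`NP_i`-continuous `H : X × [0,m]_ℤ → Y` with `H(·,0) = f` and `H(·,m) = g`. -/
def DigHomotopic (i : ℕ) (X Y : DigImage) (f g : X.carrier → Y.carrier) : Prop :=
  ∃ (m : ℕ) (H : X.carrier × Fin (m + 1) → Y.carrier),
    DigContinuous (DigImage.prod i X (digInterval m)) Y H ∧
    (∀ x, H (x, 0) = f x) ∧ (∀ x, H (x, Fin.last m) = g x)

/-- An `NP_i`-digital H-space `(X,e,μ)`. -/
structure IsHSpace (i : ℕ) (X : DigImage) (e : X.carrier)
    (μ : X.carrier × X.carrier → X.carrier) : Prop where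
  continuous : DigContinuous (DigImage.prod i X X) X μ
  right_unit : DigHomotopic i X X (fun x => μ (x, e)) id
  left_unit : DigHomotopic i X X (fun x => μ (e, x)) id

/-- H-equivalence of `NP_i`-digital H-spaces. -/
def HSpaceEquiv (i : ℕ) (X : DigImage) (eX : X.carrier)
    (μX : X.carrier × X.carrier → X.carrier)
    (Y : DigImage) (eY : Y.carrier)
    (μY : Y.carrier × Y.carrier → Y.carrier) : Prop :=
  ∃ (f : X.carrier → Y.carrier) (g : Y.carrier → X.carrier),
    DigContinuous X Y f ∧ DigContinuous Y X g ∧ f eX = eY ∧ g eY = eX ∧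
    DigHomotopic i Y Y (f ∘ g) id ∧ DigHomotopic i X X (g ∘ f) id ∧
    DigHomotopic i (DigImage.prod i X X) Y (fun p => f (μX p)) (fun p => μY (f p.1, f p.2)) ∧
    DigHomotopic i (DigImage.prod i Y Y) X (fun p => g (μY p)) (fun p => μX (g p.1, g p.2))

/-- `NP_i`-homotopy equivalence of digital images. -/
def DigHtpyEquiv (i : ℕ) (X Y : DigImage) : Prop :=
  ∃ (f : X.carrier → Y.carrier) (g : Y.carrier → X.carrier),
    DigContinuous X Y f ∧ DigContinuous Y X g ∧
    DigHomotopic i X X (g ∘ f) id ∧ DigHomotopic i Y Y (f ∘ g) id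

/-- A digital image is `NP_i`-irreducible if it is not `NP_i`-homotopy
equivalent to any digital image with fewer points. -/
def DigIrreducible (i : ℕ) (X : DigImage) : Prop :=
  ¬ ∃ Y : DigImage, Fintype.card Y.carrier < Fintype.card X.carrier ∧ DigHtpyEquiv i X Y

/-- A digital image is connected if any two points are joined by a path
of consecutively adjacent points. -/
def DigConnected (X : DigImage) : Prop :=
  ∀ a b : X.carrier, Relation.ReflTransGen X.adj a b

/-- A digital image is `NP_i`-contractible if the identity is `NP_i`-homotopic
to a constant map. -/
def DigContractible (i : ℕ) (X : DigImage) : Prop :=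
  ∃ c : X.carrier, DigHomotopic i X X id (fun _ => c)

/-- An isomorphism of digital images: a continuous bijection with continuous inverse. -/
def IsDigIso (X Y : DigImage) (f : X.carrier → Y.carrier) : Prop :=
  DigContinuous X Y f ∧ ∃ g : Y.carrier → X.carrier,
    DigContinuous Y X g ∧ Function.LeftInverse g f ∧ Function.RightInverse g f

/-- The sub-digital-image on the points satisfying `P`, with the induced adjacency. -/
noncomputable def subImage (X : DigImage) (P : X.carrier → Prop) : DigImage where
  carrier := {x : X.carrier // P x}
  fintype := Fintype.ofFinite _
  adj a b := X.adj a.1 b.1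
  adj_refl a := X.adj_refl a.1
  adj_symm h := X.adj_symm h

/-- The connected component of `e`, as a digital image. -/
noncomputable def componentImage (X : DigImage) (e : X.carrier) : DigImage :=
  subImage X (fun x => Relation.ReflTransGen X.adj e x)

/-- Homotopy-associativity of an `NP_i`-digital multiplication:
`μ∘(id × μ) ≃ᵢ μ∘(μ × id)` as maps `X × X × X → X` with `NP_i` adjacency. -/
def HomotopyAssociative (i : ℕ) (X : DigImage)
    (μ : X.carrier × X.carrier → X.carrier) : Prop :=
  DigHomotopic i (DigImage.prod3 i X X X) X
    (fun p => μ (p.1, μ (p.2.1, p.2.2)))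
    (fun p => μ (μ (p.1, p.2.1), p.2.2))

/-- `α` is a left homotopy-inverse for the H-space `(X,e,μ)`. -/
def LeftHtpyInverse (i : ℕ) (X : DigImage) (e : X.carrier)
    (μ : X.carrier × X.carrier → X.carrier) (α : X.carrier → X.carrier) : Prop :=
  DigContinuous X X α ∧ DigContinuous X X (fun x => μ (α x, x)) ∧
  DigHomotopic i X X (fun x => μ (α x, x)) (fun _ => e)

/-- `β` is a right homotopy-inverse for the H-space `(X,e,μ)`. -/
def RightHtpyInverse (i : ℕ) (X : DigImage) (e : X.carrier)
    (μ : X.carrier × X.carrier → X.carrier) (β : X.carrier → X.carrier) : Prop :=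
  DigContinuous X X β ∧ DigContinuous X X (fun x => μ (x, β x)) ∧
  DigHomotopic i X X (fun x => μ (x, β x)) (fun _ => e)


section AuxForClassification

lemma prod2_adj (X Y : DigImage) {p q : (DigImage.prod 2 X Y).carrier} :
    (DigImage.prod 2 X Y).adj p q ↔ X.adj p.1 q.1 ∧ Y.adj p.2 q.2 := by
  show (if (2:ℕ) ≤ 1 then ((p.1 = q.1 ∧ Y.adj p.2 q.2) ∨ (p.2 = q.2 ∧ X.adj p.1 q.1))
      else (X.adj p.1 q.1 ∧ Y.adj p.2 q.2)) ↔ _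
  rw [if_neg (by norm_num)]

open Classical in
noncomputable def redMap (X : DigImage) (x₀ c : X.carrier) (h : c ≠ x₀) :
    X.carrier → (subImage X (· ≠ x₀)).carrier :=
  fun x => (if hx : x = x₀ then ⟨c, h⟩ else ⟨x, hx⟩ : {x : X.carrier // x ≠ x₀})

lemma redMap_adj_right (X : DigImage) {x₀ c : X.carrier} (hne : c ≠ x₀)
    (hdom : ∀ x', X.adj x₀ x' → X.adj c x') {a b : X.carrier} (hab : X.adj a b) :
    X.adj ((redMap X x₀ c hne) a).1 b := by
  unfold redMap
  split_ifs with hx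
  · exact hdom b (hx ▸ hab)
  · exact hab

lemma redMap_adj (X : DigImage) {x₀ c : X.carrier} (hne : c ≠ x₀)
    (hdom : ∀ x', X.adj x₀ x' → X.adj c x') {a b : X.carrier} (hab : X.adj a b) :
    X.adj ((redMap X x₀ c hne) a).1 ((redMap X x₀ c hne) b).1 := by
  unfold redMap
  split_ifs with h1 h2 h2
  · exact X.adj_refl c
  · exact hdom b (h1 ▸ hab)
  · exact X.adj_symm (hdom a (h2 ▸ X.adj_symm hab))
  · exact hab

/-- Key consequence of irreducibility: no point's neighbourhood is dominated by
another point. -/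
lemma dominated_eq (X : DigImage) (hirr : DigIrreducible 2 X) (x₀ c : X.carrier)
    (hdom : ∀ x', X.adj x₀ x' → X.adj c x') : c = x₀ := by
  by_contra hne
  refine hirr ⟨subImage X (· ≠ x₀), ?_, ?_⟩
  · exact Fintype.card_lt_of_injective_of_notMem
      (Subtype.val : (subImage X (· ≠ x₀)).carrier → X.carrier)
      Subtype.val_injective (by rintro ⟨y, hy⟩; exact y.2 hy)
  · refine ⟨redMap X x₀ c hne, Subtype.val, ?_, ?_, ?_, ?_⟩
    · intro a b hab; exact redMap_adj X hne hdom hab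
    · intro a b hab; exact hab
    · -- val ∘ redMap ≃ id on X
      refine ⟨1, fun p => if p.2 = 0 then ((redMap X x₀ c hne) p.1).1 else p.1, ?_, ?_, ?_⟩
      · intro p q hpq
        rw [prod2_adj] at hpq
        have hab := hpq.1
        dsimp only
        split_ifs with h1 h2 h2
        · exact redMap_adj X hne hdom hab
        · exact redMap_adj_right X hne hdom hab
        · exact X.adj_symm (redMap_adj_right X hne hdom (X.adj_symm hab))
        · exact hab
      · intro x; simp [Function.comp]
      · intro x
        have h10 : (Fin.last 1 : Fin 2) ≠ 0 := by decide
        simp [h10]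
    · -- redMap ∘ val ≃ id on the subimage
      refine ⟨0, fun p => p.1, ?_, ?_, ?_⟩
      · intro p q hpq; rw [prod2_adj] at hpq; exact hpq.1
      · intro y
        show y = (redMap X x₀ c hne) y.1
        unfold redMap
        rw [dif_neg y.2]
        exact Subtype.ext rfl
      · intro y; rfl

lemma homotopy_stages_id (X : DigImage) (hirr : DigIrreducible 2 X) {m : ℕ}
    {H : X.carrier × Fin (m+1) → X.carrier}
    (hc : DigContinuous (DigImage.prod 2 X (digInterval m)) X H)
    (hend : ∀ x, H (x, Fin.last m) = x) :
    ∀ (t : Fin (m+1)) (x : X.carrier), H (x, t) = x := by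
  suffices key : ∀ (k : ℕ) (t : Fin (m+1)), (t : ℕ) + k = m → ∀ x, H (x, t) = x by
    intro t x
    have := t.isLt
    exact key (m - (t : ℕ)) t (by omega) x
  intro k
  induction k with
  | zero =>
    intro t ht x
    have htl : t = Fin.last m := by
      apply Fin.ext
      simp only [Fin.val_last]
      omega
    rw [htl]; exact hend x
  | succ k ih =>
    intro t ht x
    have hlt : (t : ℕ) + 1 < m + 1 := by omega
    have hprev : ∀ y, H (y, ⟨(t : ℕ) + 1, hlt⟩) = y := ih ⟨(t : ℕ) + 1, hlt⟩ (by simp; omega)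
    refine dominated_eq X hirr x (H (x, t)) ?_
    intro x' hx'
    have hadj : (DigImage.prod 2 X (digInterval m)).adj (x, t) (x', ⟨(t : ℕ) + 1, hlt⟩) := by
      refine (prod2_adj _ _).mpr ⟨hx', ?_⟩
      show |((t : ℕ) : ℤ) - (((t : ℕ) + 1 : ℕ) : ℤ)| ≤ 1
      push_cast
      simp
    have := hc hadj
    exact (congrArg (X.adj (H (x, t))) (hprev x')).mp this

/-- Rigidity: in an `NP_2`-irreducible image, any map homotopic to the identity
is the identity. -/
lemma homotopic_id_eq (X : DigImage) (hirr : DigIrreducible 2 X)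
    {f : X.carrier → X.carrier} (hf : DigHomotopic 2 X X f id) : ∀ x, f x = x := by
  obtain ⟨m, H, hc, h0, hm⟩ := hf
  intro x
  exact (h0 x).symm.trans (homotopy_stages_id X hirr hc hm 0 x)

end AuxForClassification

/-- Classification of irreducible `NP_2`-digital H-spaces:
`{e}` is a connected component, `e` is a unit, and on `Z = X \ {e}` the
multiplication is given by a magma operation `τ` on a union of components
`A ⊆ Z × Z`, and by `e` elsewhere. -/
theorem np2_hspace_classification (X : DigImage) (e : X.carrier)
    (μ : X.carrier × X.carrier → X.carrier) (h : IsHSpace 2 X e μ)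
    (hirr : DigIrreducible 2 X) :
    (∀ x, Relation.ReflTransGen X.adj e x → x = e) ∧
    (∀ x, μ (x, e) = x) ∧
    (∀ y, μ (e, y) = y) ∧
    ∃ τ : (subImage X (· ≠ e)).carrier × (subImage X (· ≠ e)).carrier →
          (subImage X (· ≠ e)).carrier,
      DigContinuous (DigImage.prod 2 (subImage X (· ≠ e)) (subImage X (· ≠ e)))
        (subImage X (· ≠ e)) τ ∧
      ∃ A : Set ((subImage X (· ≠ e)).carrier × (subImage X (· ≠ e)).carrier),
        (∀ p q, p ∈ A →
          (DigImage.prod 2 (subImage X (· ≠ e)) (subImage X (· ≠ e))).adj p q →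
          q ∈ A) ∧
        (∀ p ∈ A, μ (p.1.1, p.2.1) = (τ p).1) ∧
        (∀ p ∉ A, μ ((p : (subImage X (· ≠ e)).carrier ×
          (subImage X (· ≠ e)).carrier).1.1, p.2.1) = e) := by
  classical
  have hru : ∀ x, μ (x, e) = x := homotopic_id_eq X hirr h.right_unit
  have hlu : ∀ y, μ (e, y) = y := homotopic_id_eq X hirr h.left_unit
  have hadje : ∀ y, X.adj e y → y = e := by
    intro y hy
    have h2 : ∀ x, μ (y, x) = x := by
      intro x
      refine dominated_eq X hirr x (μ (y, x)) ?_
      intro x' hx'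
      have hadj : (DigImage.prod 2 X X).adj (y, x) (e, x') :=
        (prod2_adj X X).mpr ⟨X.adj_symm hy, hx'⟩
      have := h.continuous hadj
      rwa [hlu x'] at this
    exact (hru y).symm.trans (h2 e)
  refine ⟨?_, hru, hlu, ?_⟩
  · intro x hx
    induction hx with
    | refl => rfl
    | tail h1 h2 ih => exact hadje _ (ih ▸ h2)
  · refine ⟨fun p => (if hp : μ (p.1.1, p.2.1) = e then p.1 else ⟨μ (p.1.1, p.2.1), hp⟩ :
        {x : X.carrier // x ≠ e}),
      ?_, {p | μ (p.1.1, p.2.1) ≠ e}, ?_, ?_, ?_⟩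
    · intro p q hpq
      rw [prod2_adj] at hpq
      have hμ : X.adj (μ (p.1.1, p.2.1)) (μ (q.1.1, q.2.1)) :=
        h.continuous ((prod2_adj X X).mpr ⟨hpq.1, hpq.2⟩)
      obtain ⟨⟨a1, ha1⟩, ⟨a2, ha2⟩⟩ := p
      obtain ⟨⟨b1, hb1⟩, ⟨b2, hb2⟩⟩ := q
      dsimp only at hμ hpq ⊢
      split_ifs with h1 h2 h2
      · exact hpq.1
      · rw [h1] at hμ
        exact absurd (hadje _ hμ) h2
      · rw [h2] at hμ
        exact absurd (hadje _ (X.adj_symm hμ)) h1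
      · exact hμ
    · intro p q hp hq
      simp only [Set.mem_setOf_eq] at hp ⊢
      replace hq := (prod2_adj _ _).1 hq
      have hμ : X.adj (μ (p.1.1, p.2.1)) (μ (q.1.1, q.2.1)) :=
        h.continuous ((prod2_adj X X).mpr ⟨hq.1, hq.2⟩)
      intro h0
      rw [h0] at hμ
      exact hp (hadje _ (X.adj_symm hμ))
    · intro p hp
      simp only [Set.mem_setOf_eq] at hp
      obtain ⟨⟨a1, ha1⟩, ⟨a2, ha2⟩⟩ := p
      dsimp only at hp ⊢
      rw [dif_neg hp]
    · intro p hp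
      simp only [Set.mem_setOf_eq, not_not] at hp
      exact hp
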